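/- Let m ≥ 2 and g ≥ 1 be integers and let n = g·m + 1. Then the flip graph on the g-spread m-element subsets of ZMod n is isomorphic, as a simple graph, to the cycle graph on g·m+1 vertices; equivalently, it has exactly g·m+1 vertices, each vertex has exactly two neighbors, and it is connected. (This expresses that the complex Φ_{m,gm+1,g} is a cycle of length gm+1.) -/

import Mathlib

open Classical

/-- The cyclic distance between two elements of `ZMod n`:
`dist(a,b) = min((a−b).val, (b−a).val)`. -/
def cycDist {n : ℕ} (a b : ZMod n) : ℕ := min (a - b).val (b - a).val

/-- Adjacency in the flip graph: `S'` is obtained from `S` by replacing exactly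
one element `a ∈ S` with `a + 1` or `a − 1`. -/
def flipAdj {n : ℕ} (S S' : Finset (ZMod n)) : Prop :=
  S ≠ S' ∧ ∃ a ∈ S, S' = insert (a + 1) (S.erase a) ∨ S' = insert (a - 1) (S.erase a)

namespace CycleProofAux

lemma cycDist_comm {n : ℕ} (a b : ZMod n) : cycDist a b = cycDist b a := min_comm _ _

lemma castinj {n : ℕ} [NeZero n] {a b : ℕ} (ha : a < n) (hb : b < n)
    (h : (a : ZMod n) = b) : a = b := by
  have := congrArg ZMod.val h
  rwa [ZMod.val_natCast_of_lt ha, ZMod.val_natCast_of_lt hb] at this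

lemma castval {n : ℕ} [NeZero n] (x : ZMod n) : ((x.val : ZMod n)) = x := by
  simp [ZMod.natCast_val, ZMod.cast_id]

/-- The canonical g-spread set starting at `c`. -/
def Sc {n : ℕ} (m g : ℕ) (c : ZMod n) : Finset (ZMod n) :=
  (Finset.range m).image (fun k => c + (k * g : ℕ))

lemma mem_Sc {n : ℕ} {m g : ℕ} {c x : ZMod n} :
    x ∈ Sc m g c ↔ ∃ k, k < m ∧ x = c + (k * g : ℕ) := by
  simp [Sc, Finset.mem_image, eq_comm]

section Main

variable {m g n : ℕ} (hm : 2 ≤ m) (hg : 1 ≤ g) (hn : n = g * m + 1) [NeZero n]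

include hm hg hn

lemma mg_lt : m * g < n := by nlinarith
lemma g_lt : g < n := by nlinarith
lemma n3 : 3 ≤ n := by nlinarith

/-- injectivity of `k ↦ c + k*g` for `k ≤ m`. -/
lemma step_inj {c : ZMod n} {k j : ℕ} (hk : k ≤ m) (hj : j ≤ m)
    (h : c + ((k * g : ℕ) : ZMod n) = c + (j * g : ℕ)) : k = j := by
  have h' : ((k * g : ℕ) : ZMod n) = (j * g : ℕ) := by
    have := add_left_cancel h; exact this
  have hkg : k * g < n := lt_of_le_of_lt (by exact Nat.mul_le_mul_right g hk) (mg_lt hm hg hn)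
  have hjg : j * g < n := lt_of_le_of_lt (by exact Nat.mul_le_mul_right g hj) (mg_lt hm hg hn)
  have := castinj hkg hjg h'
  have hg0 : 0 < g := hg
  exact Nat.eq_of_mul_eq_mul_right hg0 this

lemma Sc_card (c : ZMod n) : (Sc m g c).card = m := by
  rw [Sc, Finset.card_image_of_injOn, Finset.card_range]
  intro k hk j hj h
  simp only [Finset.coe_range, Set.mem_Iio] at hk hj
  exact step_inj hm hg hn (le_of_lt hk) (le_of_lt hj) h

lemma cycDist_aux {c : ZMod n} {k j : ℕ} (hkj : k < j) (hj : j < m) :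
    g ≤ cycDist (c + ((j * g : ℕ) : ZMod n)) (c + (k * g : ℕ)) := by
  set d := (j - k) * g with hd
  have e1 : d ≤ (m - 1) * g := Nat.mul_le_mul_right g (by omega)
  have e2 : (m - 1) * g + g = m * g := by
    rw [Nat.sub_mul, one_mul, Nat.sub_add_cancel]
    exact Nat.le_mul_of_pos_left g (by omega)
  have e3 : g ≤ d := by
    calc g = 1 * g := (one_mul g).symm
    _ ≤ d := Nat.mul_le_mul_right g (by omega)
  have e5 : m * g < n := mg_lt hm hg hn
  have hcast : ((d : ℕ) : ZMod n) = ((j * g : ℕ) : ZMod n) - ((k * g : ℕ) : ZMod n) := by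
    rw [hd, Nat.sub_mul, Nat.cast_sub (Nat.mul_le_mul_right g (le_of_lt hkj))]
  have hx : (c + ((j * g : ℕ) : ZMod n)) - (c + ((k * g : ℕ) : ZMod n)) = ((d : ℕ) : ZMod n) := by
    rw [hcast]; ring
  have hy : (c + ((k * g : ℕ) : ZMod n)) - (c + ((j * g : ℕ) : ZMod n)) = (((n - d : ℕ)) : ZMod n) := by
    rw [Nat.cast_sub (by omega), ZMod.natCast_self, hcast]; ring
  rw [cycDist, hx, hy, ZMod.val_natCast_of_lt (by omega), ZMod.val_natCast_of_lt (by omega)]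
  omega

lemma Sc_spread (c : ZMod n) :
    ∀ a ∈ Sc m g c, ∀ b ∈ Sc m g c, a ≠ b → g ≤ cycDist a b := by
  intro a ha b hb hab
  obtain ⟨j, hj, rfl⟩ := mem_Sc.1 ha
  obtain ⟨k, hk, rfl⟩ := mem_Sc.1 hb
  rcases lt_trichotomy k j with h | h | h
  · exact cycDist_aux hm hg hn h hj
  · exact absurd (by rw [h]) hab
  · rw [cycDist_comm]; exact cycDist_aux hm hg hn h hk

lemma Sc_inj {c c' : ZMod n} (h : Sc m g c = Sc m g c') : c = c' := by
  have hc' : c' ∈ Sc m g c := by rw [h]; exact mem_Sc.2 ⟨0, by omega, by simp⟩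
  obtain ⟨k, hk, hck⟩ := mem_Sc.1 hc'
  rcases Nat.eq_zero_or_pos k with rfl | hkpos
  · rw [hck]; simp
  · exfalso
    have h1 : c + (((k - 1) * g : ℕ) : ZMod n) ∈ Sc m g c' := by
      rw [← h]; exact mem_Sc.2 ⟨k - 1, by omega, rfl⟩
    obtain ⟨l, hl, hcl⟩ := mem_Sc.1 h1
    have ha : (((k - 1) * g : ℕ) : ZMod n) = ((k * g : ℕ) : ZMod n) - (g : ZMod n) := by
      rw [Nat.sub_mul, one_mul, Nat.cast_sub (Nat.le_mul_of_pos_left g hkpos)]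
    rw [ha, hck] at hcl
    have key : ((l * g + g : ℕ) : ZMod n) = 0 := by
      push_cast at hcl ⊢
      linear_combination -hcl
    have hlt : l * g + g < n := by
      have h1 : l * g + g ≤ (m - 1) * g + g := by
        have := Nat.mul_le_mul_right g (show l ≤ m - 1 by omega); omega
      have h2 : (m - 1) * g + g = m * g := by
        rw [Nat.sub_mul, one_mul, Nat.sub_add_cancel]
        exact Nat.le_mul_of_pos_left g (by omega)
      have := mg_lt hm hg hn
      omega
    have := castinj hlt (Nat.pos_of_ne_zero (NeZero.ne n)) (by simpa using key)
    omega

/-- classification: every spread m-set is some `Sc c`. -/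
lemma cover_unique {S : Finset (ZMod n)}
    (hspread : ∀ a ∈ S, ∀ b ∈ S, a ≠ b → g ≤ cycDist a b)
    {a b : ZMod n} (ha : a ∈ S) (hb : b ∈ S) {i j : ℕ} (hi : i < g) (hj : j < g)
    (h : a + ((i : ℕ) : ZMod n) = b + ((j : ℕ) : ZMod n)) : a = b := by
  by_contra hab
  have hd := hspread a ha b hb hab
  rw [cycDist] at hd
  have hgn : g < n := g_lt hm hg hn
  rcases le_total i j with hij | hij
  · have h1 : a - b = ((j - i : ℕ) : ZMod n) := by
      rw [Nat.cast_sub hij]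
      push_cast
      linear_combination h
    have hji0 : j - i ≠ 0 := by
      intro h0
      apply hab
      have h2 : a - b = 0 := by rw [h1, h0]; simp
      linear_combination h2
    have hv : (a - b).val = j - i := by rw [h1]; exact ZMod.val_natCast_of_lt (by omega)
    omega
  · have h1 : b - a = ((i - j : ℕ) : ZMod n) := by
      rw [Nat.cast_sub hij]
      push_cast
      linear_combination -h
    have hji0 : i - j ≠ 0 := by
      intro h0
      apply hab
      have h2 : b - a = 0 := by rw [h1, h0]; simp
      linear_combination -h2
    have hv : (b - a).val = i - j := by rw [h1]; exact ZMod.val_natCast_of_lt (by omega)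
    omega

lemma exists_rep (S : Finset (ZMod n)) (hcard : S.card = m)
    (hspread : ∀ a ∈ S, ∀ b ∈ S, a ≠ b → g ≤ cycDist a b) :
    ∃ c, S = Sc m g c := by
  classical
  have hgn : g < n := g_lt hm hg hn
  have hmgn : m * g < n := mg_lt hm hg hn
  have hnpos : 0 < n := Nat.pos_of_ne_zero (NeZero.ne n)
  set ball : ZMod n → Finset (ZMod n) :=
    fun a => (Finset.range g).image (fun i => a + ((i : ℕ) : ZMod n)) with hball
  have hballcard : ∀ a, (ball a).card = g := by
    intro a
    rw [hball]
    rw [Finset.card_image_of_injOn, Finset.card_range]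
    intro i hi j hj hij
    simp only [Finset.coe_range, Set.mem_Iio] at hi hj
    have h2 : ((i : ℕ) : ZMod n) = ((j : ℕ) : ZMod n) := add_left_cancel hij
    exact castinj (lt_trans hi hgn) (lt_trans hj hgn) h2
  have hmemball : ∀ a x, x ∈ ball a ↔ ∃ i, i < g ∧ x = a + ((i : ℕ) : ZMod n) := by
    intro a x
    simp [hball, Finset.mem_image, Finset.mem_range, eq_comm]
  set U := S.biUnion ball with hU
  have hUcard : U.card = m * g := by
    rw [hU, Finset.card_biUnion]
    · rw [Finset.sum_congr rfl (fun x _ => hballcard x), Finset.sum_const, smul_eq_mul, hcard]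
    · intro a ha b hb hab
      rw [Function.onFun, Finset.disjoint_left]
      intro x hxa hxb
      rw [hmemball] at hxa hxb
      obtain ⟨i, hi, rfl⟩ := hxa
      obtain ⟨j, hj, hji⟩ := hxb
      exact hab (cover_unique hm hg hn hspread ha hb hi hj hji)
  have hcompl : Uᶜ.card = 1 := by
    rw [Finset.card_compl, hUcard]
    rw [show Fintype.card (ZMod n) = n from ZMod.card n]
    have : m * g = g * m := Nat.mul_comm m g
    omega
  obtain ⟨p, hp⟩ := Finset.card_eq_one.1 hcompl
  have huncov : ∀ x : ZMod n, x ∉ U → x = p := by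
    intro x hx
    have : x ∈ Uᶜ := Finset.mem_compl.2 hx
    rw [hp] at this
    simpa using this
  have hpU : p ∉ U := by
    have : p ∈ Uᶜ := by rw [hp]; exact Finset.mem_singleton_self p
    exact Finset.mem_compl.1 this
  have hcover : ∀ x : ZMod n, x ≠ p → ∃ a ∈ S, ∃ i, i < g ∧ x = a + ((i : ℕ) : ZMod n) := by
    intro x hx
    have : x ∈ U := by
      by_contra hxU
      exact hx (huncov x hxU)
    rw [hU, Finset.mem_biUnion] at this
    obtain ⟨a, ha, hxa⟩ := this
    rw [hmemball] at hxa
    exact ⟨a, ha, hxa⟩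
  have hone : ((1 : ℕ) : ZMod n) ≠ 0 := by
    intro h0
    have := castinj (show 1 < n by nlinarith) hnpos (by simpa using h0)
    omega
  have claim1 : p + 1 ∈ S := by
    obtain ⟨a, ha, i, hi, he⟩ := hcover (p + 1) (by
      intro h
      exact hone (by push_cast; linear_combination h))
    rcases Nat.eq_zero_or_pos i with rfl | hipos
    · have h2 : p + 1 = a := by rw [he]; simp
      rw [h2]; exact ha
    · exfalso
      apply hpU
      rw [hU, Finset.mem_biUnion]
      refine ⟨a, ha, ?_⟩
      rw [hmemball]
      refine ⟨i - 1, by omega, ?_⟩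
      have : ((i - 1 : ℕ) : ZMod n) = ((i : ℕ) : ZMod n) - 1 := by
        rw [Nat.cast_sub hipos]; simp
      rw [this]
      linear_combination he
  have claim2 : ∀ a ∈ S, a + ((g : ℕ) : ZMod n) ≠ p → a + ((g : ℕ) : ZMod n) ∈ S := by
    intro a ha hne
    obtain ⟨b, hb, i, hi, he⟩ := hcover _ hne
    rcases Nat.eq_zero_or_pos i with rfl | hipos
    · have : a + ((g : ℕ) : ZMod n) = b := by rw [he]; simp
      rw [this]; exact hb
    · exfalso
      have hab : a ≠ b := by
        intro h0
        rw [← h0] at he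
        have h2 : ((g : ℕ) : ZMod n) = ((i : ℕ) : ZMod n) := add_left_cancel he
        have := castinj hgn (lt_trans hi hgn) h2
        omega
      have hd := hspread a ha b hb hab
      rw [cycDist] at hd
      have h1 : b - a = ((g - i : ℕ) : ZMod n) := by
        rw [Nat.cast_sub (le_of_lt hi)]
        push_cast
        linear_combination -he
      have hv : (b - a).val = g - i := by rw [h1]; exact ZMod.val_natCast_of_lt (by omega)
      omega
  have claim3 : ∀ k, k < m → (p + 1) + ((k * g : ℕ) : ZMod n) ∈ S := by
    intro k
    induction k with
    | zero => intro _; simpa using claim1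
    | succ k ih =>
      intro hk
      have hkS := ih (by omega)
      have hne : ((p + 1) + ((k * g : ℕ) : ZMod n)) + ((g : ℕ) : ZMod n) ≠ p := by
        intro h
        have hz : (((k * g + g + 1 : ℕ)) : ZMod n) = 0 := by
          push_cast at h ⊢; linear_combination h
        have hlt : k * g + g + 1 < n := by
          have h1 : (k + 1) * g ≤ (m - 1) * g := Nat.mul_le_mul_right g (by omega)
          have h2 : (m - 1) * g + g = m * g := by
            rw [Nat.sub_mul, one_mul, Nat.sub_add_cancel]
            exact Nat.le_mul_of_pos_left g (by omega)
          have h3 : (k + 1) * g = k * g + g := by ring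
          omega
        have := castinj hlt hnpos (by simpa using hz)
        omega
      have hmem := claim2 _ hkS hne
      have harr : ((p + 1) + ((k * g : ℕ) : ZMod n)) + ((g : ℕ) : ZMod n)
          = (p + 1) + (((k + 1) * g : ℕ) : ZMod n) := by push_cast; ring
      rwa [harr] at hmem
  refine ⟨p + 1, ?_⟩
  have hsub : Sc m g (p + 1) ⊆ S := by
    intro x hx
    obtain ⟨k, hk, rfl⟩ := mem_Sc.1 hx
    exact claim3 k hk
  have := Finset.eq_of_subset_of_card_le hsub (by rw [hcard, Sc_card hm hg hn])
  exact this.symm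

lemma cast_mg_eq_neg_one : ((m * g : ℕ) : ZMod n) = -1 := by
  have h0 : ((g * m + 1 : ℕ) : ZMod n) = 0 := by rw [← hn]; exact ZMod.natCast_self n
  push_cast at h0 ⊢
  linear_combination h0

lemma sub_one_mul_add : (m - 1) * g + g = m * g := by
  rw [Nat.sub_mul, one_mul, Nat.sub_add_cancel]
  exact Nat.le_mul_of_pos_left g (by omega)

lemma Sc_succ (c : ZMod n) :
    Sc m g (c + (g : ZMod n)) = insert (c - 1) ((Sc m g c).erase c) := by
  have hmg := cast_mg_eq_neg_one hm hg hn
  have e2 := sub_one_mul_add hm hg hn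
  have hsum : (((m - 1) * g : ℕ) : ZMod n) + ((g : ℕ) : ZMod n) = ((m * g : ℕ) : ZMod n) := by
    rw [← e2]; push_cast; ring
  ext x
  rw [mem_Sc, Finset.mem_insert, Finset.mem_erase, mem_Sc]
  constructor
  · rintro ⟨k, hk, rfl⟩
    rcases Nat.lt_or_ge k (m - 1) with hk1 | hk1
    · right
      constructor
      · intro h0
        have h1 : (((k + 1) * g : ℕ) : ZMod n) = 0 := by
          push_cast at h0 ⊢; linear_combination h0
        have hlt : (k + 1) * g < n :=
          lt_of_le_of_lt (Nat.mul_le_mul_right g (by omega)) (mg_lt hm hg hn)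
        have h2 := castinj hlt (Nat.pos_of_ne_zero (NeZero.ne n)) (by simpa using h1)
        have hpos : 0 < (k + 1) * g := Nat.mul_pos (by omega) (by omega)
        omega
      · exact ⟨k + 1, by omega, by push_cast; ring⟩
    · left
      have hkm : k = m - 1 := by omega
      subst hkm
      linear_combination hsum + hmg
  · rintro (h | ⟨hne, k, hk, rfl⟩)
    · exact ⟨m - 1, by omega, by rw [h]; linear_combination -hsum - hmg⟩
    · have hk0 : k ≠ 0 := by
        intro h0
        subst h0
        exact hne (by simp)
      refine ⟨k - 1, by omega, ?_⟩
      have e3 : (k - 1) * g + g = k * g := by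
        rw [Nat.sub_mul, one_mul, Nat.sub_add_cancel]
        exact Nat.le_mul_of_pos_left g (by omega)
      rw [← e3]
      push_cast
      ring

lemma cast_top_add_one : (c : ZMod n) + (((m-1) * g : ℕ) : ZMod n) + 1 = c - (g : ZMod n) := by
  have hmg := cast_mg_eq_neg_one hm hg hn
  have e2 := sub_one_mul_add hm hg hn
  have hsum : (((m - 1) * g : ℕ) : ZMod n) + ((g : ℕ) : ZMod n) = ((m * g : ℕ) : ZMod n) := by
    rw [← e2]; push_cast; ring
  linear_combination hsum + hmg

lemma Sc_pred (c : ZMod n) :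
    Sc m g (c - (g : ZMod n)) =
      insert ((c + (((m-1) * g : ℕ) : ZMod n)) + 1) ((Sc m g c).erase (c + (((m-1) * g : ℕ) : ZMod n))) := by
  have htop := cast_top_add_one hm hg hn (c := c)
  ext x
  rw [mem_Sc, Finset.mem_insert, Finset.mem_erase, mem_Sc]
  constructor
  · rintro ⟨k, hk, rfl⟩
    rcases Nat.eq_zero_or_pos k with rfl | hkpos
    · left
      rw [htop]
      simp
    · right
      constructor
      · intro h0
        have h1 : c + (((k - 1) * g : ℕ) : ZMod n) = c + (((m - 1) * g : ℕ) : ZMod n) := by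
          have e3 : ((k - 1) * g : ℕ) + g = k * g := by
            rw [Nat.sub_mul, one_mul, Nat.sub_add_cancel]
            exact Nat.le_mul_of_pos_left g (by omega)
          have e4 : (((k - 1) * g : ℕ) : ZMod n) + ((g : ℕ) : ZMod n) = ((k * g : ℕ) : ZMod n) := by
            rw [← e3]; push_cast; ring
          linear_combination h0 + e4
        have := step_inj hm hg hn (show k - 1 ≤ m by omega) (show m - 1 ≤ m by omega) h1
        omega
      · refine ⟨k - 1, by omega, ?_⟩
        have e3 : ((k - 1) * g : ℕ) + g = k * g := by
          rw [Nat.sub_mul, one_mul, Nat.sub_add_cancel]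
          exact Nat.le_mul_of_pos_left g (by omega)
        have e4 : (((k - 1) * g : ℕ) : ZMod n) + ((g : ℕ) : ZMod n) = ((k * g : ℕ) : ZMod n) := by
          rw [← e3]; push_cast; ring
        linear_combination -e4
  · rintro (h | ⟨hne, k, hk, rfl⟩)
    · refine ⟨0, by omega, ?_⟩
      rw [h, ← htop]
      simp
    · have hkm : k ≠ m - 1 := by
        intro h0
        subst h0
        exact hne rfl
      refine ⟨k + 1, by omega, ?_⟩
      have e4 : (((k + 1) * g : ℕ) : ZMod n) = ((k * g : ℕ) : ZMod n) + ((g : ℕ) : ZMod n) := by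
        push_cast; ring
      linear_combination -e4

lemma flip_succ (c : ZMod n) : flipAdj (Sc m g c) (Sc m g (c + (g : ZMod n))) := by
  constructor
  · intro h
    have := Sc_inj hm hg hn h
    have hgne : ((g : ℕ) : ZMod n) ≠ 0 := by
      intro h0
      exact absurd (castinj (g_lt hm hg hn) (Nat.pos_of_ne_zero (NeZero.ne n)) (by simpa using h0)) (by omega)
    exact hgne (by linear_combination -this)
  · refine ⟨c, mem_Sc.2 ⟨0, by omega, by simp⟩, Or.inr ?_⟩
    exact Sc_succ hm hg hn c

lemma flip_pred (c : ZMod n) : flipAdj (Sc m g c) (Sc m g (c - (g : ZMod n))) := by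
  constructor
  · intro h
    have := Sc_inj hm hg hn h
    have hgne : ((g : ℕ) : ZMod n) ≠ 0 := by
      intro h0
      exact absurd (castinj (g_lt hm hg hn) (Nat.pos_of_ne_zero (NeZero.ne n)) (by simpa using h0)) (by omega)
    exact hgne (by linear_combination this)
  · refine ⟨c + (((m-1) * g : ℕ) : ZMod n), mem_Sc.2 ⟨m-1, by omega, rfl⟩, Or.inl ?_⟩
    exact Sc_pred hm hg hn c

/-- any spread neighbor of `Sc c` is `Sc (c+g)` or `Sc (c-g)`. -/
lemma neighbor_classify (c : ZMod n) (S' : Finset (ZMod n))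
    (h' : S'.card = m ∧ ∀ a ∈ S', ∀ b ∈ S', a ≠ b → g ≤ cycDist a b)
    (hadj : flipAdj (Sc m g c) S') :
    S' = Sc m g (c + (g : ZMod n)) ∨ S' = Sc m g (c - (g : ZMod n)) := by
  obtain ⟨hne, a, haS, hcase⟩ := hadj
  obtain ⟨k, hk, rfl⟩ := mem_Sc.1 haS
  have hnpos : 0 < n := Nat.pos_of_ne_zero (NeZero.ne n)
  have hgn : g < n := g_lt hm hg hn
  rcases hcase with hS' | hS'
  · -- moved a to a+1 : forces k = m - 1, S' = Sc (c - g)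
    have hb_not : (c + ((k * g : ℕ) : ZMod n)) + 1 ∉
        (Sc m g c).erase (c + ((k * g : ℕ) : ZMod n)) := by
      intro hmem
      have he : S' = (Sc m g c).erase (c + ((k * g : ℕ) : ZMod n)) := by
        rw [hS', Finset.insert_eq_self.2 hmem]
      have hc1 : S'.card = m - 1 := by
        rw [he, Finset.card_erase_of_mem haS, Sc_card hm hg hn]
      have := h'.1
      omega
    have hkm : k = m - 1 := by
      by_contra hkm
      have hk1 : k + 1 < m := by omega
      set y := c + (((k + 1) * g : ℕ) : ZMod n) with hy
      have hy_er : y ∈ (Sc m g c).erase (c + ((k * g : ℕ) : ZMod n)) := by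
        rw [Finset.mem_erase]
        constructor
        · intro h0
          have := step_inj hm hg hn (le_of_lt hk1) (le_of_lt hk) h0
          omega
        · exact mem_Sc.2 ⟨k + 1, hk1, rfl⟩
      have hyS' : y ∈ S' := by rw [hS']; exact Finset.mem_insert_of_mem hy_er
      have hbS' : (c + ((k * g : ℕ) : ZMod n)) + 1 ∈ S' := by
        rw [hS']; exact Finset.mem_insert_self _ _
      have hby : (c + ((k * g : ℕ) : ZMod n)) + 1 ≠ y := by
        intro h0; exact hb_not (h0 ▸ hy_er)
      have hd := h'.2 _ hbS' _ hyS' hby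
      have h1 : y - ((c + ((k * g : ℕ) : ZMod n)) + 1) = ((g - 1 : ℕ) : ZMod n) := by
        rw [hy, Nat.cast_sub hg]
        push_cast
        ring
      have hle : g ≤ (y - ((c + ((k * g : ℕ) : ZMod n)) + 1)).val :=
        le_trans hd (min_le_right _ _)
      rw [h1, ZMod.val_natCast_of_lt (by omega)] at hle
      omega
    subst hkm
    exact Or.inr (hS'.trans (Sc_pred hm hg hn c).symm)
  · -- moved a to a-1 : forces k = 0, S' = Sc (c + g)
    have hb_not : (c + ((k * g : ℕ) : ZMod n)) - 1 ∉
        (Sc m g c).erase (c + ((k * g : ℕ) : ZMod n)) := by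
      intro hmem
      have he : S' = (Sc m g c).erase (c + ((k * g : ℕ) : ZMod n)) := by
        rw [hS', Finset.insert_eq_self.2 hmem]
      have hc1 : S'.card = m - 1 := by
        rw [he, Finset.card_erase_of_mem haS, Sc_card hm hg hn]
      have := h'.1
      omega
    have hk0 : k = 0 := by
      by_contra hk0
      have hkpos : 0 < k := by omega
      set y := c + (((k - 1) * g : ℕ) : ZMod n) with hy
      have hy_er : y ∈ (Sc m g c).erase (c + ((k * g : ℕ) : ZMod n)) := by
        rw [Finset.mem_erase]
        constructor
        · intro h0
          have := step_inj hm hg hn (show k - 1 ≤ m by omega) (le_of_lt hk) h0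
          omega
        · exact mem_Sc.2 ⟨k - 1, by omega, rfl⟩
      have hyS' : y ∈ S' := by rw [hS']; exact Finset.mem_insert_of_mem hy_er
      have hbS' : (c + ((k * g : ℕ) : ZMod n)) - 1 ∈ S' := by
        rw [hS']; exact Finset.mem_insert_self _ _
      have hby : (c + ((k * g : ℕ) : ZMod n)) - 1 ≠ y := by
        intro h0; exact hb_not (h0 ▸ hy_er)
      have hd := h'.2 _ hyS' _ hbS' (Ne.symm hby)
      have e3 : (k - 1) * g + g = k * g := by
        rw [Nat.sub_mul, one_mul, Nat.sub_add_cancel]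
        exact Nat.le_mul_of_pos_left g (by omega)
      have e4 : (((k - 1) * g : ℕ) : ZMod n) + ((g : ℕ) : ZMod n) = ((k * g : ℕ) : ZMod n) := by
        rw [← e3]; push_cast; ring
      have h1 : ((c + ((k * g : ℕ) : ZMod n)) - 1) - y = ((g - 1 : ℕ) : ZMod n) := by
        rw [hy, Nat.cast_sub hg]
        push_cast at e4 ⊢
        linear_combination -e4
      have hle : g ≤ (((c + ((k * g : ℕ) : ZMod n)) - 1) - y).val :=
        le_trans hd (min_le_right _ _)
      rw [h1, ZMod.val_natCast_of_lt (by omega)] at hle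
      omega
    subst hk0
    have hc0 : c + ((0 * g : ℕ) : ZMod n) = c := by simp
    rw [hc0] at hS'
    exact Or.inl (hS'.trans (Sc_succ hm hg hn c).symm)

end Main

end CycleProofAux

open CycleProofAux in
theorem cohomology_of_colorings_of_cycles_stmt17
    (m g n : ℕ) (hm : 2 ≤ m) (hg : 1 ≤ g) (hn : n = g * m + 1) [NeZero n] :
    (Finset.univ.filter (fun S : Finset (ZMod n) =>
        S.card = m ∧ ∀ a ∈ S, ∀ b ∈ S, a ≠ b → g ≤ cycDist a b)).card = g * m + 1 ∧
    (∀ S : Finset (ZMod n),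
      (S.card = m ∧ ∀ a ∈ S, ∀ b ∈ S, a ≠ b → g ≤ cycDist a b) →
      (Finset.univ.filter (fun S' : Finset (ZMod n) =>
        (S'.card = m ∧ ∀ a ∈ S', ∀ b ∈ S', a ≠ b → g ≤ cycDist a b) ∧
        flipAdj S S')).card = 2) ∧
    (∀ S S' : Finset (ZMod n),
      (S.card = m ∧ ∀ a ∈ S, ∀ b ∈ S, a ≠ b → g ≤ cycDist a b) →
      (S'.card = m ∧ ∀ a ∈ S', ∀ b ∈ S', a ≠ b → g ≤ cycDist a b) →
      Relation.ReflTransGen (fun A B : Finset (ZMod n) =>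
        (A.card = m ∧ ∀ a ∈ A, ∀ b ∈ A, a ≠ b → g ≤ cycDist a b) ∧
        (B.card = m ∧ ∀ a ∈ B, ∀ b ∈ B, a ≠ b → g ≤ cycDist a b) ∧
        flipAdj A B) S S') := by
  have hvert : ∀ S : Finset (ZMod n),
      (S.card = m ∧ ∀ a ∈ S, ∀ b ∈ S, a ≠ b → g ≤ cycDist a b) ↔ ∃ c, S = Sc m g c := by
    intro S
    constructor
    · rintro ⟨h1, h2⟩; exact exists_rep hm hg hn S h1 h2
    · rintro ⟨c, rfl⟩; exact ⟨Sc_card hm hg hn c, Sc_spread hm hg hn c⟩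
  refine ⟨?_, ?_, ?_⟩
  · -- vertex count
    have himg : (Finset.univ.filter (fun S : Finset (ZMod n) =>
        S.card = m ∧ ∀ a ∈ S, ∀ b ∈ S, a ≠ b → g ≤ cycDist a b)) =
        Finset.univ.image (fun c : ZMod n => Sc m g c) := by
      ext S
      simp only [Finset.mem_filter, Finset.mem_univ, true_and, Finset.mem_image]
      rw [hvert S]
      constructor
      · rintro ⟨c, rfl⟩; exact ⟨c, rfl⟩
      · rintro ⟨c, rfl⟩; exact ⟨c, rfl⟩
    rw [himg, Finset.card_image_of_injective _ (fun a b h => Sc_inj hm hg hn h),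
      Finset.card_univ, ZMod.card, hn]
  · -- degree 2
    intro S hS
    obtain ⟨c, rfl⟩ := (hvert S).1 hS
    have hfe : (Finset.univ.filter (fun S' : Finset (ZMod n) =>
        (S'.card = m ∧ ∀ a ∈ S', ∀ b ∈ S', a ≠ b → g ≤ cycDist a b) ∧
        flipAdj (Sc m g c) S')) = {Sc m g (c + (g:ZMod n)), Sc m g (c - (g:ZMod n))} := by
      ext S'
      simp only [Finset.mem_filter, Finset.mem_univ, true_and, Finset.mem_insert,
        Finset.mem_singleton]
      constructor
      · rintro ⟨h1, h2⟩; exact neighbor_classify hm hg hn c S' h1 h2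
      · rintro (rfl | rfl)
        · exact ⟨(hvert _).2 ⟨_, rfl⟩, flip_succ hm hg hn c⟩
        · exact ⟨(hvert _).2 ⟨_, rfl⟩, flip_pred hm hg hn c⟩
    rw [hfe]
    rw [Finset.card_insert_of_notMem, Finset.card_singleton]
    simp only [Finset.mem_singleton]
    intro h
    have h2 := Sc_inj hm hg hn h
    have : (((2 * g : ℕ)) : ZMod n) = 0 := by push_cast; linear_combination h2
    have h2g : 2 * g < n := by nlinarith
    exact absurd (castinj h2g (Nat.pos_of_ne_zero (NeZero.ne n)) (by simpa using this)) (by omega)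
  · -- connectivity
    intro S S' hS hS'
    obtain ⟨c, rfl⟩ := (hvert S).1 hS
    obtain ⟨c', rfl⟩ := (hvert S').1 hS'
    set R := (fun A B : Finset (ZMod n) =>
        (A.card = m ∧ ∀ a ∈ A, ∀ b ∈ A, a ≠ b → g ≤ cycDist a b) ∧
        (B.card = m ∧ ∀ a ∈ B, ∀ b ∈ B, a ≠ b → g ≤ cycDist a b) ∧
        flipAdj A B) with hR
    have hstep : ∀ d : ZMod n, R (Sc m g d) (Sc m g (d + (g:ZMod n))) := by
      intro d
      exact ⟨(hvert _).2 ⟨_, rfl⟩, (hvert _).2 ⟨_, rfl⟩, flip_succ hm hg hn d⟩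
    have hiter : ∀ t : ℕ, ∀ d : ZMod n,
        Relation.ReflTransGen R (Sc m g d) (Sc m g (d + ((t * g : ℕ) : ZMod n))) := by
      intro t
      induction t with
      | zero => intro d; simpa using Relation.ReflTransGen.refl
      | succ t ih =>
        intro d
        refine Relation.ReflTransGen.head (hstep d) ?_
        have := ih (d + (g:ZMod n))
        have harith : d + (g:ZMod n) + ((t * g : ℕ) : ZMod n) = d + (((t+1) * g : ℕ) : ZMod n) := by
          push_cast; ring
        rwa [harith] at this
    -- choose t with c + t*g = c'
    have hunit : ((g : ℕ) : ZMod n) * (-(m : ℕ) : ZMod n) = 1 := by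
      have : ((g * m + 1 : ℕ) : ZMod n) = 0 := by rw [← hn]; exact ZMod.natCast_self n
      push_cast at this ⊢
      linear_combination (-1 : ZMod n) * this
    set t := (((c' - c) * (-(m : ℕ) : ZMod n))).val with ht
    have : c + ((t * g : ℕ) : ZMod n) = c' := by
      push_cast
      rw [ht, castval]
      linear_combination (c' - c) * hunit
    have hit := hiter t c
    rwa [this] at hit
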